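/- A nonzero comultiplication R-module M is uniform if and only if M is cocyclic. -/
import Mathlib


/-- `M` is a comultiplication `R`-module: every submodule is of the form `(0 :_M I)`. -/
def IsComultiplication (R M : Type*) [CommRing R] [AddCommGroup M] [Module R M] : Prop :=
  ∀ N : Submodule R M, ∃ I : Ideal R, ∀ m : M, m ∈ N ↔ ∀ r ∈ I, r • m = 0

/-- A submodule is large (essential) if it meets every nonzero submodule nontrivially. -/
def IsLarge {R M : Type*} [CommRing R] [AddCommGroup M] [Module R M]
    (N : Submodule R M) : Prop :=
  ∀ L : Submodule R M, L ≠ ⊥ → N ⊓ L ≠ ⊥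

/-- Every nonzero comultiplication module contains a simple (minimal) submodule. -/
theorem exists_atom_of_comul {R M : Type*} [CommRing R] [AddCommGroup M] [Module R M]
    [Nontrivial M] (hc : IsComultiplication R M) :
    ∃ S : Submodule R M, IsAtom S := by
  obtain ⟨x, hx⟩ := exists_ne (0 : M)
  set A : Ideal R := Submodule.annihilator (Submodule.span R {x}) with hA
  have hmemA : ∀ r : R, r ∈ A ↔ r • x = 0 := fun r =>
    Submodule.mem_annihilator_span_singleton x r
  have hAne : A ≠ ⊤ := by
    intro h
    apply hx
    have h1 : (1 : R) ∈ A := h ▸ Submodule.mem_top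
    simpa using (hmemA 1).mp h1
  obtain ⟨P, hPmax, hAP⟩ := Ideal.exists_le_maximal A hAne
  set N : Submodule R M := P • (Submodule.span R {x}) with hN
  obtain ⟨I, hI⟩ := hc N
  have hxN : x ∉ N := by
    intro h
    rw [hN, Submodule.mem_smul_span_singleton] at h
    obtain ⟨p, hp, hpx⟩ := h
    have h1p : (1 : R) - p ∈ A := by
      rw [hmemA, sub_smul, one_smul, hpx, sub_self]
    have : (1 : R) ∈ P := by
      have := P.add_mem (hAP h1p) hp
      simpa using this
    exact hPmax.ne_top (Ideal.eq_top_iff_one P |>.mpr this)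
  have hb : ∃ b ∈ I, b • x ≠ 0 := by
    by_contra h
    push_neg at h
    exact hxN ((hI x).mpr h)
  obtain ⟨b, hbI, hbx⟩ := hb
  set y : M := b • x with hy
  have hPy : ∀ p ∈ P, p • y = 0 := by
    intro p hp
    have hpxN : p • x ∈ N := Submodule.smul_mem_smul hp (Submodule.mem_span_singleton_self x)
    have := (hI (p • x)).mp hpxN b hbI
    rw [hy, smul_comm p b x]
    exact this
  refine ⟨Submodule.span R {y}, ?_, ?_⟩
  · rw [Ne, Submodule.span_singleton_eq_bot]
    exact hbx
  · intro L hL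
    by_contra hLbot
    obtain ⟨z, hzL, hz0⟩ := Submodule.exists_mem_ne_zero_of_ne_bot hLbot
    obtain ⟨r, hr⟩ := Submodule.mem_span_singleton.mp (hL.le hzL)
    have hrP : r ∉ P := by
      intro h
      exact hz0 (hr ▸ hPy r h)
    obtain ⟨s, c, hcP, hsc⟩ := hPmax.exists_inv hrP
    have hyL : y ∈ L := by
      have hydecomp : y = s • (r • y) + c • y := by
        rw [smul_smul, ← add_smul, hsc, one_smul]
      rw [hydecomp, hPy c hcP, add_zero, hr]
      exact L.smul_mem s hzL
    exact hL.ne (le_antisymm hL.le ((Submodule.span_singleton_le_iff_mem y L).mpr hyL))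

/-- A nonzero comultiplication module is uniform iff it is cocyclic
(its socle is simple and large). -/
theorem stmt5 {R M : Type*} [CommRing R] [AddCommGroup M] [Module R M]
    [Nontrivial M] (hc : IsComultiplication R M) :
    (∀ N K : Submodule R M, N ≠ ⊥ → K ≠ ⊥ → N ⊓ K ≠ ⊥) ↔
      IsAtom (sSup {S : Submodule R M | IsAtom S}) ∧
        IsLarge (sSup {S : Submodule R M | IsAtom S}) := by
  constructor
  · intro h
    obtain ⟨S, hS⟩ := exists_atom_of_comul hc
    have hset : {T : Submodule R M | IsAtom T} = {S} := by
      ext T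
      simp only [Set.mem_setOf_eq, Set.mem_singleton_iff]
      constructor
      · intro hT
        have h1 : T ⊓ S ≠ ⊥ := h T S hT.1 hS.1
        have h2 : T ⊓ S = T := by
          rcases hT.le_iff.mp inf_le_left with h' | h'
          · exact absurd h' h1
          · exact h'
        have h3 : T ⊓ S = S := by
          rcases hS.le_iff.mp inf_le_right with h' | h'
          · exact absurd h' h1
          · exact h'
        rw [← h2, h3]
      · rintro rfl; exact hS
    rw [hset, sSup_singleton]
    exact ⟨hS, fun L hL => h S L hS.1 hL⟩
  · rintro ⟨hatom, hlarge⟩ N K hN hK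
    set s := sSup {S : Submodule R M | IsAtom S} with hs
    have hsN : s ≤ N := by
      have h1 : s ⊓ N ≠ ⊥ := hlarge N hN
      rcases hatom.le_iff.mp inf_le_left with h' | h'
      · exact absurd h' h1
      · exact h' ▸ inf_le_right
    have hsK : s ≤ K := by
      have h1 : s ⊓ K ≠ ⊥ := hlarge K hK
      rcases hatom.le_iff.mp inf_le_left with h' | h'
      · exact absurd h' h1
      · exact h' ▸ inf_le_right
    intro h
    exact hatom.1 (le_bot_iff.mp (h ▸ le_inf hsN hsK))
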